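/- With α(t) = cos(η(t))·p + sin(η(t))·γ(t) as in the setup, the rectifying condition ⟨p, (1/w(t))·T'(t) − α(t)⟩ = 0 holds for all t ∈ ℝ if and only if η satisfies the differential equation sin(η(t))·η''(t) − 2·cos(η(t))·η'(t)² + cos(η(t))·sin²(η(t)) = 0 for all t ∈ ℝ. -/

import Mathlib

open Real

/-- The Minkowski scalar product on `ℝ⁴₁`:
`⟨x,y⟩ = -x₁y₁ + x₂y₂ + x₃y₃ + x₄y₄`. -/
noncomputable def mdot (x y : Fin 4 → ℝ) : ℝ :=
  -(x 0 * y 0) + x 1 * y 1 + x 2 * y 2 + x 3 * y 3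

lemma mdot_comm (x y : Fin 4 → ℝ) : mdot x y = mdot y x := by
  simp [mdot]; ring

lemma mdot_smul (x y : Fin 4 → ℝ) (a : ℝ) : mdot x (a • y) = a * mdot x y := by
  simp [mdot, Pi.smul_apply, smul_eq_mul]; ring

lemma mdot_smul_add (x y z : Fin 4 → ℝ) (a b : ℝ) :
    mdot x (a • y + b • z) = a * mdot x y + b * mdot x z := by
  simp [mdot, Pi.add_apply, Pi.smul_apply, smul_eq_mul]; ring

lemma mdot_sub (x u v : Fin 4 → ℝ) : mdot x (u - v) = mdot x u - mdot x v := by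
  simp [mdot, Pi.sub_apply]; ring

lemma hasDerivAt_mdot (p : Fin 4 → ℝ) (f : ℝ → Fin 4 → ℝ) (t : ℝ)
    (hf : DifferentiableAt ℝ f t) :
    HasDerivAt (fun s => mdot p (f s)) (mdot p (deriv f t)) t := by
  have hd := hf.hasDerivAt
  have hi : ∀ i, HasDerivAt (fun s => f s i) (deriv f t i) t :=
    fun i => hasDerivAt_pi.1 hd i
  have h := ((((hi 0).const_mul (p 0)).neg.add ((hi 1).const_mul (p 1))).add
      ((hi 2).const_mul (p 2))).add ((hi 3).const_mul (p 3))
  simp only [mdot]; exact h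

/-- The curve `α(t) = cos(η t) • p + sin(η t) • γ(t)` satisfies the rectifying
condition `⟨p, (1/w) T' - α⟩ = 0` iff `η` satisfies
`sin(η) η'' - 2 cos(η) (η')² + cos(η) sin²(η) = 0`. -/
theorem rectifying_condition_iff_eta_ode
    (p : Fin 4 → ℝ) (hp : mdot p p = 1)
    (γ : ℝ → Fin 4 → ℝ) (hγsm : ContDiff ℝ (⊤ : ℕ∞) γ)
    (hγ1 : ∀ t, mdot (γ t) (γ t) = 1)
    (hγp : ∀ t, mdot (γ t) p = 0)
    (hγ' : ∀ t, mdot (deriv γ t) (deriv γ t) = -1)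
    (η : ℝ → ℝ) (hηsm : ContDiff ℝ (⊤ : ℕ∞) η)
    (hsinpos : ∀ t, 0 < Real.sin (η t))
    (htimelike : ∀ t, (deriv η t) ^ 2 < Real.sin (η t) ^ 2)
    (w : ℝ → ℝ)
    (hw : ∀ t, w t = Real.sqrt (Real.sin (η t) ^ 2 - (deriv η t) ^ 2))
    (α : ℝ → Fin 4 → ℝ)
    (hα : ∀ t, α t = Real.cos (η t) • p + Real.sin (η t) • γ t)
    (T : ℝ → Fin 4 → ℝ) (hT : ∀ t, T t = (w t)⁻¹ • deriv α t)
    :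
    (∀ t, mdot p ((w t)⁻¹ • deriv T t - α t) = 0) ↔
      (∀ t, Real.sin (η t) * deriv (deriv η) t
          - 2 * Real.cos (η t) * (deriv η t) ^ 2
          + Real.cos (η t) * Real.sin (η t) ^ 2 = 0) := by
  -- basic smoothness
  have hηd : Differentiable ℝ η := hηsm.differentiable (by simp)
  have hη'sm : ContDiff ℝ (⊤ : ℕ∞) (deriv η) := (contDiff_infty_iff_deriv.1 hηsm).2
  have hη'd : Differentiable ℝ (deriv η) := hη'sm.differentiable (by simp)
  have hαfun : α = fun t => Real.cos (η t) • p + Real.sin (η t) • γ t := funext hα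
  have hαsm : ContDiff ℝ (⊤ : ℕ∞) α := by
    rw [hαfun]
    exact ((Real.contDiff_cos.comp hηsm).smul contDiff_const).add
      ((Real.contDiff_sin.comp hηsm).smul hγsm)
  have hα'sm : ContDiff ℝ (⊤ : ℕ∞) (deriv α) := (contDiff_infty_iff_deriv.1 hαsm).2
  have hα'd : Differentiable ℝ (deriv α) := hα'sm.differentiable (by simp)
  -- positivity facts for w
  have hu : ∀ t, 0 < Real.sin (η t) ^ 2 - deriv η t ^ 2 := fun t => sub_pos.2 (htimelike t)
  have hwpos : ∀ t, 0 < w t := fun t => by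
    rw [hw t]; exact Real.sqrt_pos.2 (hu t)
  have hwsq : ∀ t, w t ^ 2 = Real.sin (η t) ^ 2 - deriv η t ^ 2 := fun t => by
    rw [hw t]; exact Real.sq_sqrt (hu t).le
  -- derivative of w
  have hsin' : ∀ t, HasDerivAt (fun s => Real.sin (η s)) (Real.cos (η t) * deriv η t) t :=
    fun t => (Real.hasDerivAt_sin (η t)).comp t (hηd t).hasDerivAt
  have hη'' : ∀ t, HasDerivAt (deriv η) (deriv (deriv η) t) t := fun t => (hη'd t).hasDerivAt
  have hus : ∀ t, HasDerivAt (fun s => Real.sin (η s) ^ 2 - deriv η s ^ 2)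
      (2 * Real.sin (η t) * (Real.cos (η t) * deriv η t) -
        2 * deriv η t * deriv (deriv η) t) t := by
    intro t
    have h := ((hsin' t).pow 2).sub ((hη'' t).pow 2)
    exact h.congr_deriv (by norm_num)
  have hw' : ∀ t, HasDerivAt w
      (1 / (2 * w t) * (2 * Real.sin (η t) * (Real.cos (η t) * deriv η t) -
        2 * deriv η t * deriv (deriv η) t)) t := by
    intro t
    have h := (Real.hasDerivAt_sqrt (ne_of_gt (hu t))).comp t (hus t)
    have h2 : HasDerivAt w
        (1 / (2 * Real.sqrt (Real.sin (η t) ^ 2 - deriv η t ^ 2)) *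
          (2 * Real.sin (η t) * (Real.cos (η t) * deriv η t) -
            2 * deriv η t * deriv (deriv η) t)) t := by
      apply h.congr_of_eventuallyEq
      exact Filter.Eventually.of_forall (fun s => hw s)
    rw [hw t]
    exact h2
  have hwd : Differentiable ℝ w := fun t => (hw' t).differentiableAt
  -- mdot p (α t) = cos (η t)
  have hpα : ∀ t, mdot p (α t) = Real.cos (η t) := by
    intro t
    rw [hα t, mdot_smul_add, hp, mdot_comm p (γ t), hγp t]
    ring
  -- mdot p (deriv α t) = - sin (η t) * deriv η t
  have hpα' : ∀ t, mdot p (deriv α t) = -Real.sin (η t) * deriv η t := by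
    intro t
    have h1 := hasDerivAt_mdot p α t (hαsm.differentiable (by simp) t)
    have h2 : HasDerivAt (fun s => mdot p (α s)) (-Real.sin (η t) * deriv η t) t := by
      have hc : HasDerivAt (fun s => Real.cos (η s)) (-Real.sin (η t) * deriv η t) t :=
        (Real.hasDerivAt_cos (η t)).comp t (hηd t).hasDerivAt
      have : (fun s => mdot p (α s)) = fun s => Real.cos (η s) := funext hpα
      rw [this]; exact hc
    exact h1.unique h2
  -- T is differentiable
  have hTfun : T = fun t => (w t)⁻¹ • deriv α t := funext hT
  have hTd : Differentiable ℝ T := by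
    rw [hTfun]
    exact fun t => ((hwd t).inv (hwpos t).ne').smul (hα'd t)
  -- mdot p (T t)
  have hpT : ∀ t, mdot p (T t) = (w t)⁻¹ * (-Real.sin (η t) * deriv η t) := by
    intro t
    rw [hT t, mdot_smul, hpα' t]
  -- mdot p (deriv T t) computed as derivative of explicit scalar function
  have hpT' : ∀ t, mdot p (deriv T t) =
      -(1 / (2 * w t) * (2 * Real.sin (η t) * (Real.cos (η t) * deriv η t) -
          2 * deriv η t * deriv (deriv η) t)) / (w t) ^ 2 *
        (-Real.sin (η t) * deriv η t) +
      (w t)⁻¹ * (-(Real.cos (η t) * deriv η t) * deriv η t +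
        -Real.sin (η t) * deriv (deriv η) t) := by
    intro t
    have h1 := hasDerivAt_mdot p T t (hTd t)
    have hnum : HasDerivAt (fun s => -Real.sin (η s) * deriv η s)
        (-(Real.cos (η t) * deriv η t) * deriv η t +
          -Real.sin (η t) * deriv (deriv η) t) t :=
      (hsin' t).neg.mul (hη'' t)
    have hinv : HasDerivAt (fun s => (w s)⁻¹)
        (-(1 / (2 * w t) * (2 * Real.sin (η t) * (Real.cos (η t) * deriv η t) -
            2 * deriv η t * deriv (deriv η) t)) / (w t) ^ 2) t :=
      (hw' t).inv (hwpos t).ne'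
    have h2 := hinv.mul hnum
    have hfe : (fun s => mdot p (T s)) =
        fun s => (w s)⁻¹ * (-Real.sin (η s) * deriv η s) := funext hpT
    rw [hfe] at h1
    exact h1.unique h2
  -- pointwise equivalence
  apply forall_congr'
  intro t
  rw [mdot_sub, mdot_smul, hpT' t, hpα t]
  set s := Real.sin (η t) with hs
  set c := Real.cos (η t) with hc
  set d := deriv η t with hd
  set e := deriv (deriv η) t with he
  set W := w t with hW
  have hWpos : 0 < W := hwpos t
  have hWne : W ≠ 0 := hWpos.ne'
  have hW2 : W ^ 2 = s ^ 2 - d ^ 2 := hwsq t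
  have hspos : 0 < s := hsinpos t
  have hsne : s ≠ 0 := hspos.ne'
  have hkey : (W⁻¹ * (-(1 / (2 * W) * (2 * s * (c * d) - 2 * d * e)) / W ^ 2 * (-s * d) +
        W⁻¹ * (-(c * d) * d + -s * e)) - c) * W ^ 4 =
      -(s ^ 2) * (s * e - 2 * c * d ^ 2 + c * s ^ 2) := by
    field_simp
    linear_combination (-s * e - c * (W ^ 2 + s ^ 2)) * hW2
  constructor
  · intro h
    have h4 : -(s ^ 2) * (s * e - 2 * c * d ^ 2 + c * s ^ 2) = 0 := by
      rw [← hkey, h]; ring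
    rcases mul_eq_zero.1 h4 with h' | h'
    · nlinarith [hspos]
    · exact h'
  · intro h
    have h4 : (W⁻¹ * (-(1 / (2 * W) * (2 * s * (c * d) - 2 * d * e)) / W ^ 2 * (-s * d) +
        W⁻¹ * (-(c * d) * d + -s * e)) - c) * W ^ 4 = 0 := by
      rw [hkey, h]; ring
    rcases mul_eq_zero.1 h4 with h' | h'
    · exact h'
    · exact absurd h' (by positivity)
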